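/- Let T₁ : V → W and T₂ : U → V be linear. Then G₂G₁ is an inner inverse of T₁T₂ for all inner inverses G₁ of T₁ and G₂ of T₂ if and only if T₁T₂ = 0 or ker T₁ ≤ im T₂. -/

import Mathlib

theorem exists_inner_inverse {F V W : Type*} [Field F]
    [AddCommGroup V] [Module F V] [AddCommGroup W] [Module F W]
    (T : V →ₗ[F] W) : ∃ G : W →ₗ[F] V, T ∘ₗ G ∘ₗ T = T := by
  obtain ⟨q, hq⟩ := (LinearMap.range T).exists_isCompl
  obtain ⟨s, hs⟩ := T.rangeRestrict.exists_rightInverse_of_surjective T.range_rangeRestrict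
  refine ⟨s ∘ₗ ((LinearMap.range T).linearProjOfIsCompl q hq), ?_⟩
  ext v
  have h1 : (LinearMap.range T).linearProjOfIsCompl q hq (T v)
      = ⟨T v, LinearMap.mem_range_self T v⟩ :=
    Submodule.linearProjOfIsCompl_apply_left hq ⟨T v, LinearMap.mem_range_self T v⟩
  have h2 := congrArg Subtype.val
    (LinearMap.congr_fun hs ⟨T v, LinearMap.mem_range_self T v⟩)
  simpa [h1] using h2

theorem all_inner_inverses_reverse_order_iff {F U V W : Type*} [Field F]
    [AddCommGroup U] [Module F U] [AddCommGroup V] [Module F V]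
    [AddCommGroup W] [Module F W]
    (T₁ : V →ₗ[F] W) (T₂ : U →ₗ[F] V) :
    (∀ (G₁ : W →ₗ[F] V) (G₂ : V →ₗ[F] U),
        T₁ ∘ₗ G₁ ∘ₗ T₁ = T₁ → T₂ ∘ₗ G₂ ∘ₗ T₂ = T₂ →
        (T₁ ∘ₗ T₂) ∘ₗ (G₂ ∘ₗ G₁) ∘ₗ (T₁ ∘ₗ T₂) = T₁ ∘ₗ T₂) ↔
      (T₁ ∘ₗ T₂ = 0 ∨ LinearMap.ker T₁ ≤ LinearMap.range T₂) := by
  constructor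
  · intro H
    by_contra hc
    push_neg at hc
    obtain ⟨hne, hker⟩ := hc
    obtain ⟨k, hk1, hk2⟩ := SetLike.not_le_iff_exists.mp hker
    have hk1' : T₁ k = 0 := hk1
    obtain ⟨u, hu⟩ := DFunLike.ne_iff.mp hne
    set w₀ : W := T₁ (T₂ u) with hw₀
    have hw : w₀ ≠ 0 := by simpa using hu
    -- a dual vector on W with value 1 at w₀
    have hφ : ¬ ∀ φ : Module.Dual F W, φ w₀ = 0 := by
      rw [Module.forall_dual_apply_eq_zero_iff F w₀]; exact hw
    push_neg at hφ
    obtain ⟨φ₀, hφ₀⟩ := hφ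
    set φ : Module.Dual F W := (φ₀ w₀)⁻¹ • φ₀ with hφdef
    have hφ1 : φ w₀ = 1 := by
      simp [hφdef, inv_mul_cancel₀ hφ₀]
    -- a dual vector on V vanishing on range T₂ with value 1 at k
    set π := (LinearMap.range T₂).mkQ with hπ
    have hπk : π k ≠ 0 := by
      simpa [hπ, Submodule.Quotient.mk_eq_zero] using hk2
    have hχ : ¬ ∀ χ : Module.Dual F (V ⧸ LinearMap.range T₂), χ (π k) = 0 := by
      rw [Module.forall_dual_apply_eq_zero_iff F (π k)]; exact hπk
    push_neg at hχ
    obtain ⟨χ₀, hχ₀⟩ := hχ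
    set ψ : Module.Dual F V := (χ₀ (π k))⁻¹ • (χ₀ ∘ₗ π) with hψdef
    have hψ1 : ψ k = 1 := by
      simp [hψdef, inv_mul_cancel₀ hχ₀]
    have hψ0 : ∀ x : U, ψ (T₂ x) = 0 := by
      intro x
      have : π (T₂ x) = 0 := by
        simp [hπ, Submodule.Quotient.mk_eq_zero]
      simp [hψdef, this]
    obtain ⟨G, hG⟩ := exists_inner_inverse T₁
    obtain ⟨G', hG'⟩ := exists_inner_inverse T₂
    have hGw : T₁ (G w₀) = w₀ := LinearMap.congr_fun hG (T₂ u)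
    set G₁ : W →ₗ[F] V := G + φ.smulRight (T₂ u + k - G w₀) with hG₁def
    set G₂ : V →ₗ[F] U := G' + ψ.smulRight (u - G' k) with hG₂def
    have hvec : T₁ (T₂ u + k - G w₀) = 0 := by
      simp [map_add, map_sub, hk1', hGw]
      exact sub_eq_zero.mpr hw₀.symm
    have h1 : T₁ ∘ₗ G₁ ∘ₗ T₁ = T₁ := by
      ext v
      have := LinearMap.congr_fun hG v
      simp only [hG₁def, LinearMap.comp_apply, LinearMap.add_apply,
        LinearMap.smulRight_apply, map_add, map_smul, hvec, smul_zero, add_zero]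
      exact this
    have h2 : T₂ ∘ₗ G₂ ∘ₗ T₂ = T₂ := by
      ext x
      have := LinearMap.congr_fun hG' x
      simp only [hG₂def, LinearMap.comp_apply, LinearMap.add_apply,
        LinearMap.smulRight_apply, hψ0 x, zero_smul, add_zero]
      exact this
    have key := LinearMap.congr_fun (H G₁ G₂ h1 h2) u
    have hG₁w₀ : G₁ w₀ = T₂ u + k := by
      simp [hG₁def, hφ1]
    have hG₂Tu : T₂ (G₂ (T₂ u)) = T₂ u := LinearMap.congr_fun h2 u
    have hG₂k : G₂ k = u := by
      simp [hG₂def, hψ1]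
    rw [LinearMap.comp_apply, LinearMap.comp_apply, LinearMap.comp_apply,
      LinearMap.comp_apply, LinearMap.comp_apply, ← hw₀, hG₁w₀] at key
    rw [map_add, map_add, hG₂k, hG₂Tu, map_add] at key
    have : w₀ + w₀ = w₀ := key
    exact hw (right_eq_add.mp this.symm)
  · rintro (h | hle) G₁ G₂ h1 h2
    · rw [h]; simp
    · ext u
      set v : V := T₂ u with hv
      have hker : T₁ (v - G₁ (T₁ v)) = 0 := by
        have := LinearMap.congr_fun h1 v
        simp only [LinearMap.comp_apply] at this
        simp [map_sub, this]
      obtain ⟨u', hu'⟩ := hle hker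
      have hGT : G₁ (T₁ v) = v - T₂ u' := by
        rw [hu']; abel
      have hT₂u' : T₁ (T₂ u') = 0 := by
        rw [hu']
        exact hker
      have hG₂T : ∀ x : U, T₂ (G₂ (T₂ x)) = T₂ x := fun x => LinearMap.congr_fun h2 x
      simp only [LinearMap.comp_apply, ← hv, hGT, map_sub, hG₂T u, hG₂T u']
      rw [hT₂u', sub_zero]
      rw [hv, hG₂T u]
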